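/- Let I' ⊆ ℝ be a nonempty open interval and let q : ℝ → ℝ be a Borel function whose restriction to I' is continuous and strictly increasing and is, on every compact subinterval of I', the difference of two convex functions (so that the right derivative q'_+(x) = lim_{h↘0} (q(x+h) − q(x))/h exists for every x ∈ I'). Then the following are equivalent: (i) the set {x ∈ I' : q'_+(x) = 0} has Lebesgue measure zero; (ii) the pushforward under q of Lebesgue measure restricted to I' is absolutely continuous with respect to Lebesgue measure. -/

import Mathlib

open MeasureTheory Set Filter Topology

/-- Theorem 2.7, (b) ⇔ (c): for a Borel function `q` that is continuous and
strictly increasing on a nonempty open interval `I` and is a difference of two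
convex functions on every compact subinterval of `I` (with right derivative
`qp` on `I`), the set `{x ∈ I : qp x = 0}` is Lebesgue-null if and only if the
pushforward under `q` of Lebesgue measure restricted to `I` is absolutely
continuous with respect to Lebesgue measure. -/
private lemma slope_right_tendsto {q : ℝ → ℝ} {y d : ℝ} (h : HasDerivAt q d y) :
    Tendsto (fun h : ℝ => (q (y + h) - q y) / h) (𝓝[>] (0:ℝ)) (𝓝 d) := by
  have T1 : Tendsto (fun h : ℝ => y + h) (𝓝[>] (0:ℝ)) (𝓝[≠] y) := by
    apply tendsto_nhdsWithin_of_tendsto_nhds_of_eventually_within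
    · have : Tendsto (fun h : ℝ => y + h) (𝓝 (0:ℝ)) (𝓝 y) := by
        simpa using (continuous_add_left y).tendsto (0:ℝ)
      exact this.mono_left nhdsWithin_le_nhds
    · filter_upwards [self_mem_nhdsWithin] with h hh
      have : (0:ℝ) < h := hh
      simp only [mem_compl_iff, mem_singleton_iff]
      linarith
  have h2 := (hasDerivAt_iff_tendsto_slope.1 h).comp T1
  refine h2.congr fun h => ?_
  simp [slope_def_field, Function.comp]

theorem stmt_3 (I : Set ℝ) (hI_open : IsOpen I) (hI_ne : I.Nonempty)
    (hI_conn : I.OrdConnected)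
    (q : ℝ → ℝ) (hq_meas : Measurable q)
    (hq_cont : ContinuousOn q I) (hq_mono : StrictMonoOn q I)
    (hq_dc : ∀ a b : ℝ, a ∈ I → b ∈ I → a ≤ b → ∃ f g : ℝ → ℝ,
      ConvexOn ℝ (Set.Icc a b) f ∧ ConvexOn ℝ (Set.Icc a b) g ∧
      ∀ x ∈ Set.Icc a b, q x = f x - g x)
    (qp : ℝ → ℝ)
    (hqp : ∀ x ∈ I,
      Filter.Tendsto (fun h : ℝ => (q (x + h) - q x) / h) (𝓝[>] 0) (𝓝 (qp x))) :
    volume {x ∈ I | qp x = 0} = 0 ↔ (volume.restrict I).map q ≪ volume := by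
  have hI_meas : MeasurableSet I := hI_open.measurableSet
  -- measurability of qp on I via sequential limits
  have hg_meas : ∀ n : ℕ, Measurable (fun x => (q (x + ((n:ℝ)+1)⁻¹) - q x) / ((n:ℝ)+1)⁻¹) :=
    fun n => ((hq_meas.comp (measurable_id.add_const _)).sub hq_meas).div_const _
  have hg_tend : ∀ x ∈ I, Tendsto (fun n : ℕ => (q (x + ((n:ℝ)+1)⁻¹) - q x) / ((n:ℝ)+1)⁻¹)
      atTop (𝓝 (qp x)) := by
    intro x hx
    have h1 : Tendsto (fun n : ℕ => ((n:ℝ)+1)⁻¹) atTop (𝓝[>] (0:ℝ)) := by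
      apply tendsto_nhdsWithin_of_tendsto_nhds_of_eventually_within
      · simpa [one_div] using tendsto_one_div_add_atTop_nhds_zero_nat (𝕜 := ℝ)
      · exact Eventually.of_forall fun n => mem_Ioi.2 (by positivity)
    exact (hqp x hx).comp h1
  have hqp_aem : AEMeasurable qp (volume.restrict I) :=
    aemeasurable_of_tendsto_metrizable_ae' (fun n => (hg_meas n).aemeasurable)
      ((ae_restrict_iff' hI_meas).2 (ae_of_all _ hg_tend))
  set qp' : ℝ → ℝ := hqp_aem.mk qp with hqp'def
  have hqp'_meas : Measurable qp' := hqp_aem.measurable_mk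
  have hqp'_ae : qp =ᵐ[volume.restrict I] qp' := hqp_aem.ae_eq_mk
  -- a.e. differentiability with derivative qp
  have hderiv_ae : ∀ᵐ x ∂(volume.restrict I), HasDerivAt q (qp x) x := by
    rw [ae_restrict_iff' hI_meas, ae_iff]
    have hset : {x | ¬ (x ∈ I → HasDerivAt q (qp x) x)}
        = {x ∈ I | ¬ HasDerivAt q (qp x) x} := by
      ext x; by_cases hx : x ∈ I <;> simp [hx]
    rw [hset]
    apply measure_null_of_locally_null
    rintro x ⟨hxI, -⟩
    obtain ⟨ε, hε, hball⟩ := Metric.isOpen_iff.1 hI_open x hxI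
    set a := x - ε/2 with ha
    set b := x + ε/2 with hb
    have hab : Icc a b ⊆ I := by
      intro y hy
      have h1 := hy.1; have h2 := hy.2
      simp only [ha, hb] at h1 h2
      apply hball
      rw [Metric.mem_ball, Real.dist_eq, abs_sub_lt_iff]
      constructor <;> linarith
    set c : ℝ → ℝ := fun y => max a (min y b) with hc
    have hc_mem : ∀ y, c y ∈ Icc a b := by
      intro y
      refine ⟨le_max_left _ _, max_le (by simp [ha, hb]; linarith) (min_le_right _ _)⟩
    have hqc_mono : Monotone (q ∘ c) := by
      intro y z hyz
      exact hq_mono.monotoneOn (hab (hc_mem y)) (hab (hc_mem z))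
        (max_le_max le_rfl (min_le_min hyz le_rfl))
    have hdiff := hqc_mono.ae_differentiableAt
    refine ⟨{x ∈ I | ¬ HasDerivAt q (qp x) x} ∩ Ioo a b,
      inter_mem self_mem_nhdsWithin
        (mem_nhdsWithin_of_mem_nhds (Ioo_mem_nhds (by simp [ha]; linarith) (by simp [hb]; linarith))), ?_⟩
    apply measure_mono_null (t := {y | ¬ DifferentiableAt ℝ (q ∘ c) y})
    · rintro y ⟨⟨hyI, hynd⟩, hyIoo⟩
      intro hdy
      apply hynd
      have heq : (q ∘ c) =ᶠ[𝓝 y] q := by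
        filter_upwards [Ioo_mem_nhds hyIoo.1 hyIoo.2] with z hz
        simp [hc, Function.comp, min_eq_left hz.2.le, max_eq_right hz.1.le]
      have hd : HasDerivAt q (deriv (q ∘ c) y) y :=
        (hdy.hasDerivAt).congr_of_eventuallyEq heq.symm
      have huniq : qp y = deriv (q ∘ c) y :=
        tendsto_nhds_unique (hqp y hyI) (slope_right_tendsto hd)
      rw [huniq]
      exact hd
    · simpa [ae_iff] using hdiff
  -- a good measurable subset W of I
  obtain ⟨W, hW_meas, hWI, hIW0, hWgood⟩ :
      ∃ W : Set ℝ, MeasurableSet W ∧ W ⊆ I ∧ volume (I \ W) = 0 ∧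
        ∀ x ∈ W, HasDerivAt q (qp x) x ∧ qp x = qp' x := by
    have hae : ∀ᵐ x ∂(volume.restrict I), HasDerivAt q (qp x) x ∧ qp x = qp' x :=
      hderiv_ae.and hqp'_ae
    set bad := {x | ¬ (HasDerivAt q (qp x) x ∧ qp x = qp' x)} with hbad_def
    have hbad : volume.restrict I bad = 0 := hae
    refine ⟨I \ toMeasurable (volume.restrict I) bad,
      hI_meas.diff (measurableSet_toMeasurable _ _), diff_subset, ?_, ?_⟩
    · have hsub : I \ (I \ toMeasurable (volume.restrict I) bad)
          ⊆ toMeasurable (volume.restrict I) bad ∩ I := by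
        intro y hy
        simp only [mem_diff, mem_inter_iff, not_and, not_not] at hy ⊢
        exact ⟨hy.2 hy.1, hy.1⟩
      apply measure_mono_null hsub
      rw [← Measure.restrict_apply (measurableSet_toMeasurable _ _),
        measure_toMeasurable]
      exact hbad
    · intro x hx
      have hnb : x ∉ bad := fun hb => hx.2 (subset_toMeasurable _ _ hb)
      simpa [hbad_def] using hnb
  -- key change-of-variables identity
  have key : ∀ B : Set ℝ, MeasurableSet B → B ⊆ W →
      volume (q '' B) = ∫⁻ x in B, ENNReal.ofReal |qp' x| := by
    intro B hB hBW
    have hf' : ∀ x ∈ B, HasFDerivWithinAt q ((1 : ℝ →L[ℝ] ℝ).smulRight (qp' x)) B x := by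
      intro x hx
      obtain ⟨hd, he⟩ := hWgood x (hBW hx)
      rw [← he]
      exact hd.hasDerivWithinAt.hasFDerivWithinAt
    have hinj : InjOn q B := (hq_mono.injOn).mono (hBW.trans hWI)
    have := lintegral_image_eq_lintegral_abs_det_fderiv_mul volume hB hf' hinj 1
    simpa [ContinuousLinearMap.det_toSpanSingleton, setLIntegral_one] using this
  constructor
  · -- (i) → (ii)
    intro hZ
    refine Measure.AbsolutelyContinuous.mk (fun A hA hA0 => ?_)
    rw [Measure.map_apply hq_meas hA, Measure.restrict_apply (hq_meas hA)]
    set B := (q ⁻¹' A ∩ I) ∩ W ∩ {x | qp' x ≠ 0} with hBdef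
    have h0meas : MeasurableSet {x | qp' x = 0} := hqp'_meas (measurableSet_singleton 0)
    have hne_meas : MeasurableSet {x | qp' x ≠ 0} := h0meas.compl
    have hB_meas : MeasurableSet B :=
      (((hq_meas hA).inter hI_meas).inter hW_meas).inter hne_meas
    have hB0 : volume B = 0 := by
      have himg : volume (q '' B) = 0 :=
        measure_mono_null (image_subset_iff.2 fun x hx => hx.1.1.1) hA0
      rw [key B hB_meas (fun x hx => hx.1.2)] at himg
      have hae0 := (setLIntegral_eq_zero_iff hB_meas
        (hqp'_meas.abs.ennreal_ofReal)).1 himg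
      have hsub : B ⊆ {x | ¬ (x ∈ B → ENNReal.ofReal |qp' x| = 0)} := by
        intro x hx
        simp only [mem_setOf_eq, Classical.not_imp, ENNReal.ofReal_eq_zero, not_le]
        exact ⟨hx, abs_pos.2 hx.2⟩
      exact measure_mono_null hsub (ae_iff.1 hae0)
    have hdecomp : q ⁻¹' A ∩ I ⊆ {x ∈ I | qp x = 0} ∪ (I \ W) ∪ B := by
      intro x hx
      by_cases hxW : x ∈ W
      · by_cases h0 : qp' x = 0
        · exact Or.inl (Or.inl ⟨hx.2, ((hWgood x hxW).2).trans h0⟩)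
        · exact Or.inr ⟨⟨hx, hxW⟩, h0⟩
      · exact Or.inl (Or.inr ⟨hx.2, hxW⟩)
    exact measure_mono_null hdecomp
      (measure_union_null (measure_union_null hZ hIW0) hB0)
  · -- (ii) → (i)
    intro habs
    set B₂ := W ∩ {x | qp' x = 0} with hB2def
    have h0meas : MeasurableSet {x | qp' x = 0} := hqp'_meas (measurableSet_singleton 0)
    have hB2_meas : MeasurableSet B₂ := hW_meas.inter h0meas
    have himg : volume (q '' B₂) = 0 := by
      rw [key B₂ hB2_meas inter_subset_left]
      rw [setLIntegral_congr_fun_ae hB2_meas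
        (ae_of_all _ (fun x hx => show ENNReal.ofReal |qp' x| = 0 by
          have h : qp' x = 0 := hx.2
          simp [h]))]
      simp
    set A := toMeasurable volume (q '' B₂) with hAdef
    have hA0 : volume A = 0 := by rw [hAdef, measure_toMeasurable]; exact himg
    have hmap := habs hA0
    rw [Measure.map_apply hq_meas (measurableSet_toMeasurable _ _),
      Measure.restrict_apply (hq_meas (measurableSet_toMeasurable _ _))] at hmap
    have hB2_0 : volume B₂ = 0 := by
      refine measure_mono_null (fun x hx => ?_) hmap
      exact ⟨subset_toMeasurable _ _ (mem_image_of_mem q hx), hWI hx.1⟩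
    have hdecomp : {x ∈ I | qp x = 0} ⊆ B₂ ∪ (I \ W) := by
      intro x hx
      by_cases hxW : x ∈ W
      · exact Or.inl ⟨hxW, ((hWgood x hxW).2).symm.trans hx.2⟩
      · exact Or.inr ⟨hx.1, hxW⟩
    exact measure_mono_null hdecomp (measure_union_null hB2_0 hIW0)
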